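/- Assume additionally that there is L > 0 such that for every q ∈ D and all u₁, u₂ ∈ V: ‖u₁ − u₂‖_V ≤ L·‖A(q,u₁) − A(q,u₂)‖_W. If the reduced variational source condition holds, i.e., there is b ∈ (0,1) such that for all q ∈ D: −⟨ξ, q − q†⟩ ≤ b·Δ_ξ(q, q†) + ψ(‖𝐅(q) − 𝐅(q†)‖^p), then the all-at-once variational source condition holds with ψ(t) replaced by ψ(C̄·t), where C̄ := 2^{p−1}·max{1, ‖𝒞‖^p·L^p}: for all (q,u) ∈ D × V, −⟨ξ, q − q†⟩ ≤ b·Δ_ξ(q, q†) + ψ(C̄·‖𝔽(q,u) − 𝔽(q†,u†)‖^p). -/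

import Mathlib

lemma helper_rpow_add {x y p : ℝ} (hx : 0 ≤ x) (hy : 0 ≤ y) (hp : 1 ≤ p) :
    (x + y) ^ p ≤ 2 ^ (p - 1) * (x ^ p + y ^ p) := by
  lift x to NNReal using hx
  lift y to NNReal using hy
  exact_mod_cast NNReal.rpow_add_le_mul_rpow_add_rpow x y hp

/-- If the inverse of `A(q,·)` is uniformly Lipschitz and the reduced variational
source condition holds, then the all-at-once variational source condition holds with
`ψ(t)` replaced by `ψ(C̄·t)`, `C̄ = 2^{p-1}·max{1, ‖𝒞‖^p·L^p}`. -/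
theorem stmt_2 {Q V W Z : Type*}
    [NormedAddCommGroup Q] [NormedSpace ℝ Q]
    [NormedAddCommGroup V] [NormedSpace ℝ V]
    [NormedAddCommGroup W] [NormedSpace ℝ W]
    [NormedAddCommGroup Z] [NormedSpace ℝ Z]
    (D : Set Q) (A : Q → V → W) (obs : V →L[ℝ] Z) (S : Q → V)
    (hS : ∀ q ∈ D, A q (S q) = 0)
    (p : ℝ) (hp : 1 ≤ p)
    (qd : Q) (hqd : qd ∈ D)
    (Rcheck : Q → ℝ) (hRnn : ∀ q, 0 ≤ Rcheck q)
    (ξ : Q →L[ℝ] ℝ) (hξ : ∀ q ∈ D, ξ (q - qd) ≤ Rcheck q - Rcheck qd)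
    (ψ : ℝ → ℝ) (hψcont : ContinuousOn ψ (Set.Ici (0 : ℝ)))
    (hψmono : MonotoneOn ψ (Set.Ici (0 : ℝ)))
    (hψ0 : ψ 0 = 0) (hψnn : ∀ t : ℝ, 0 ≤ t → 0 ≤ ψ t)
    (L : ℝ) (hL : 0 < L)
    (hLip : ∀ q ∈ D, ∀ u₁ u₂ : V, ‖u₁ - u₂‖ ≤ L * ‖A q u₁ - A q u₂‖)
    (b : ℝ) (hb0 : 0 < b) (hb1 : b < 1)
    (hRED : ∀ q ∈ D,
      -(ξ (q - qd)) ≤ b * (Rcheck q - Rcheck qd - ξ (q - qd)) +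
        ψ (‖obs (S q) - obs (S qd)‖ ^ p)) :
    ∀ q ∈ D, ∀ u : V,
      -(ξ (q - qd)) ≤ b * (Rcheck q - Rcheck qd - ξ (q - qd)) +
        ψ ((2 : ℝ) ^ (p - 1) * max 1 (‖obs‖ ^ p * L ^ p) *
          (‖A q u - A qd (S qd)‖ ^ p + ‖obs u - obs (S qd)‖ ^ p)) := by
  intro q hq u
  have hp0 : 0 ≤ p := le_trans zero_le_one hp
  have hAqd : A qd (S qd) = 0 := hS qd hqd
  set a : ℝ := ‖A q u - A qd (S qd)‖ with ha
  set c : ℝ := ‖obs u - obs (S qd)‖ with hc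
  have ha' : a = ‖A q u‖ := by rw [ha, hAqd, sub_zero]
  have hSu : ‖S q - u‖ ≤ L * a := by
    have := hLip q hq (S q) u
    rwa [hS q hq, zero_sub, norm_neg, ← ha'] at this
  -- triangle inequality step
  have h1 : ‖obs (S q) - obs (S qd)‖ ≤ ‖obs‖ * L * a + c := by
    calc ‖obs (S q) - obs (S qd)‖
        ≤ ‖obs (S q) - obs u‖ + ‖obs u - obs (S qd)‖ := norm_sub_le_norm_sub_add_norm_sub _ _ _
      _ ≤ ‖obs‖ * ‖S q - u‖ + c := by
          rw [← map_sub]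
          exact add_le_add_left (obs.le_opNorm _) c
      _ ≤ ‖obs‖ * (L * a) + c :=
          add_le_add_left (mul_le_mul_of_nonneg_left hSu (norm_nonneg _)) c
      _ = ‖obs‖ * L * a + c := by ring
  have ha0 : (0:ℝ) ≤ a := norm_nonneg _
  have hc0 : (0:ℝ) ≤ c := norm_nonneg _
  have hK0 : (0:ℝ) ≤ ‖obs‖ * L * a := by positivity
  have h2 : ‖obs (S q) - obs (S qd)‖ ^ p ≤
      (2:ℝ) ^ (p - 1) * max 1 (‖obs‖ ^ p * L ^ p) * (a ^ p + c ^ p) := by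
    calc ‖obs (S q) - obs (S qd)‖ ^ p
        ≤ (‖obs‖ * L * a + c) ^ p :=
          Real.rpow_le_rpow (norm_nonneg _) h1 hp0
      _ ≤ (2:ℝ) ^ (p - 1) * ((‖obs‖ * L * a) ^ p + c ^ p) :=
          helper_rpow_add hK0 hc0 hp
      _ = (2:ℝ) ^ (p - 1) * ((‖obs‖ ^ p * L ^ p) * a ^ p + c ^ p) := by
          rw [Real.mul_rpow (by positivity) ha0, Real.mul_rpow (norm_nonneg _) hL.le]
      _ ≤ (2:ℝ) ^ (p - 1) * (max 1 (‖obs‖ ^ p * L ^ p) * a ^ p +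
            max 1 (‖obs‖ ^ p * L ^ p) * c ^ p) := by
          apply mul_le_mul_of_nonneg_left _ (by positivity)
          have hap : (0:ℝ) ≤ a ^ p := Real.rpow_nonneg ha0 p
          have hcp : (0:ℝ) ≤ c ^ p := Real.rpow_nonneg hc0 p
          apply add_le_add
          · exact mul_le_mul_of_nonneg_right (le_max_right _ _) hap
          · nth_rewrite 1 [← one_mul (c ^ p)]
            exact mul_le_mul_of_nonneg_right (le_max_left _ _) hcp
      _ = (2:ℝ) ^ (p - 1) * max 1 (‖obs‖ ^ p * L ^ p) * (a ^ p + c ^ p) := by ring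
  have hmem1 : ‖obs (S q) - obs (S qd)‖ ^ p ∈ Set.Ici (0:ℝ) :=
    Real.rpow_nonneg (norm_nonneg _) p
  have hmem2 : (2:ℝ) ^ (p - 1) * max 1 (‖obs‖ ^ p * L ^ p) * (a ^ p + c ^ p) ∈
      Set.Ici (0:ℝ) := by
    have h1' : (0:ℝ) ≤ a ^ p := Real.rpow_nonneg ha0 p
    have h2' : (0:ℝ) ≤ c ^ p := Real.rpow_nonneg hc0 p
    have : (0:ℝ) ≤ (2:ℝ) ^ (p-1) := Real.rpow_nonneg (by norm_num) _
    exact mul_nonneg (mul_nonneg this (zero_le_one.trans (le_max_left _ _))) (add_nonneg h1' h2')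
  calc -(ξ (q - qd)) ≤ b * (Rcheck q - Rcheck qd - ξ (q - qd)) +
        ψ (‖obs (S q) - obs (S qd)‖ ^ p) := hRED q hq
    _ ≤ b * (Rcheck q - Rcheck qd - ξ (q - qd)) +
        ψ ((2:ℝ) ^ (p - 1) * max 1 (‖obs‖ ^ p * L ^ p) * (a ^ p + c ^ p)) :=
      add_le_add_right (hψmono hmem1 hmem2 h2) _
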